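/- Let P be a [0,1]-valued random variable under a probability measure μ, let c ∈ (0,1], let c* ∈ (0, c] be a constant, and let U be uniform on [0,1] independent of P. Define the single-stage randomized p-value P1 = U·1{P ≥ c} + (P/c*)·1{P < c}. If μ(P ≤ t·c*) ≤ t·μ(P ≤ c*) for all t ∈ [0,1] and μ(P < c) = μ(P ≤ c*), then μ(P1 ≤ t) ≤ t for all t ∈ [0,1]. -/

import Mathlib

open MeasureTheory Set ProbabilityTheory

/-- Validity of the (modified) single-stage randomized p-value
`P1 = U·1{P ≥ c} + (P/c*)·1{P < c}`. -/
theorem stmt_5 {Ω : Type*} [MeasurableSpace Ω] (μ : Measure Ω) [IsProbabilityMeasure μ]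
    (P : Ω → ℝ) (hPmeas : Measurable P) (hrange : ∀ ω, P ω ∈ Icc (0:ℝ) 1)
    (c : ℝ) (hc : c ∈ Ioc (0:ℝ) 1)
    (cstar : ℝ) (hcstar : cstar ∈ Ioc (0:ℝ) c)
    (U : Ω → ℝ) (hUmeas : Measurable U)
    (hUunif : μ.map U = volume.restrict (Icc (0:ℝ) 1))
    (hindep : IndepFun P U μ)
    (hvalid : ∀ t ∈ Icc (0:ℝ) 1,
      μ {ω | P ω ≤ t * cstar} ≤ ENNReal.ofReal t * μ {ω | P ω ≤ cstar})
    (hsupp : μ {ω | P ω < c} = μ {ω | P ω ≤ cstar})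
    (P1 : Ω → ℝ)
    (hP1 : ∀ ω, P1 ω = if P ω < c then P ω / cstar else U ω) :
    ∀ t ∈ Icc (0:ℝ) 1, μ {ω | P1 ω ≤ t} ≤ ENNReal.ofReal t := by
  intro t ht
  obtain ⟨ht0, ht1⟩ := ht
  have hcs0 : (0:ℝ) < cstar := hcstar.1
  have hset : {ω | P1 ω ≤ t}
      = ({ω | P ω < c} ∩ {ω | P ω ≤ t * cstar})
        ∪ ({ω | P ω < c}ᶜ ∩ {ω | U ω ≤ t}) := by
    ext ω
    simp only [mem_setOf_eq, hP1, mem_union, mem_inter_iff, mem_compl_iff, mem_setOf_eq]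
    by_cases h : P ω < c
    · simp [h, div_le_iff₀ hcs0, mul_comm]
    · simp [h]
  -- uniform part
  have hμU : μ {ω | U ω ≤ t} = ENNReal.ofReal t := by
    have h1 : {ω | U ω ≤ t} = U ⁻¹' (Iic t) := rfl
    rw [h1, ← Measure.map_apply hUmeas measurableSet_Iic, hUunif,
      Measure.restrict_apply measurableSet_Iic]
    have h2 : Iic t ∩ Icc (0:ℝ) 1 = Icc 0 t := by
      ext x
      simp only [mem_inter_iff, mem_Iic, mem_Icc]
      constructor
      · rintro ⟨h1, h2, h3⟩; exact ⟨h2, h1⟩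
      · rintro ⟨h1, h2⟩; exact ⟨h2, h1, h2.trans ht1⟩
    rw [h2, Real.volume_Icc, sub_zero]
  -- independence part
  have hB : μ ({ω | P ω < c}ᶜ ∩ {ω | U ω ≤ t})
      = μ ({ω | P ω < c}ᶜ) * ENNReal.ofReal t := by
    have h1 : {ω | P ω < c}ᶜ = P ⁻¹' (Ici c) := by
      ext ω; simp [not_lt]
    have h2 : {ω | U ω ≤ t} = U ⁻¹' (Iic t) := rfl
    rw [h1, h2, hindep.measure_inter_preimage_eq_mul _ _ measurableSet_Ici
      measurableSet_Iic, ← h2, hμU]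
  have hA : μ ({ω | P ω < c} ∩ {ω | P ω ≤ t * cstar})
      ≤ ENNReal.ofReal t * μ {ω | P ω < c} := by
    calc μ ({ω | P ω < c} ∩ {ω | P ω ≤ t * cstar})
        ≤ μ {ω | P ω ≤ t * cstar} := measure_mono inter_subset_right
      _ ≤ ENNReal.ofReal t * μ {ω | P ω ≤ cstar} := hvalid t ⟨ht0, ht1⟩
      _ = ENNReal.ofReal t * μ {ω | P ω < c} := by rw [hsupp]
  have hmeas : MeasurableSet {ω | P ω < c} := hPmeas measurableSet_Iio
  have hcompl : μ {ω | P ω < c} + μ ({ω | P ω < c}ᶜ) = 1 :=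
    (measure_add_measure_compl hmeas).trans measure_univ
  calc μ {ω | P1 ω ≤ t}
      ≤ μ ({ω | P ω < c} ∩ {ω | P ω ≤ t * cstar})
        + μ ({ω | P ω < c}ᶜ ∩ {ω | U ω ≤ t}) := by
        rw [hset]; exact measure_union_le _ _
    _ ≤ ENNReal.ofReal t * μ {ω | P ω < c}
        + μ ({ω | P ω < c}ᶜ) * ENNReal.ofReal t := by
        rw [hB]; exact add_le_add_left hA _
    _ = ENNReal.ofReal t * (μ {ω | P ω < c} + μ ({ω | P ω < c}ᶜ)) := by ring
    _ = ENNReal.ofReal t := by rw [hcompl, mul_one]
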